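/- Let Λ be the linear map on d×d matrices given by Λ(X) = ∑_a A_a^{1/2} X A_a^{1/2} with A_a = λ Π_a + (1-λ)/d · 1 for a rank-one PVM {Π_a}_{a=1}^d and 0 ≤ λ < 1. Then Λ acts as the identity on matrices diagonal in the {Π_a} basis, and multiplies each off-diagonal matrix unit Π_i X Π_j (i ≠ j) by the factor κ = 2√(λ + (1-λ)/d)·√((1-λ)/d) + (d-2)(1-λ)/d. In particular, Λ is invertible for κ > 0. -/

import Mathlib

open Matrix BigOperators ComplexOrder

set_option maxHeartbeats 1000000 in

theorem stmt_16 {d : ℕ} (hd : 2 ≤ d)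
    (lam : ℝ) (hlam0 : 0 ≤ lam) (hlam1 : lam < 1)
    (P : Fin d → Matrix (Fin d) (Fin d) ℂ)
    (hPh : ∀ a, (P a).IsHermitian)
    (hPo : ∀ a a', P a * P a' = if a = a' then P a else 0)
    (hPsum : ∑ a, P a = 1)
    (hPtr : ∀ a, (P a).trace = 1)
    (sqrtA : Fin d → Matrix (Fin d) (Fin d) ℂ)
    (hsqrtA : ∀ a, sqrtA a = ((Real.sqrt (lam + (1 - lam) / d) : ℝ) : ℂ) • P a
      + ((Real.sqrt ((1 - lam) / d) : ℝ) : ℂ) • ((1 : Matrix (Fin d) (Fin d) ℂ) - P a))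
    (Λ : Matrix (Fin d) (Fin d) ℂ → Matrix (Fin d) (Fin d) ℂ)
    (hΛ : ∀ X, Λ X = ∑ a, sqrtA a * X * sqrtA a)
    (κ : ℝ)
    (hκ : κ = 2 * Real.sqrt (lam + (1 - lam) / d) * Real.sqrt ((1 - lam) / d)
      + ((d : ℝ) - 2) * ((1 - lam) / d)) :
    (∀ c : Fin d → ℂ, Λ (∑ i, c i • P i) = ∑ i, c i • P i) ∧
    (∀ i j, i ≠ j → ∀ X : Matrix (Fin d) (Fin d) ℂ,
      Λ (P i * X * P j) = (κ : ℂ) • (P i * X * P j)) ∧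
    (0 < κ → Function.Bijective Λ) := by
  have hd0 : (0:ℝ) < (d:ℝ) := by exact_mod_cast lt_of_lt_of_le (by norm_num) hd
  have h1l : (0:ℝ) ≤ 1 - lam := by linarith
  set α : ℝ := Real.sqrt (lam + (1 - lam) / d) with hαdef
  set β : ℝ := Real.sqrt ((1 - lam) / d) with hβdef
  have hβsq : β ^ 2 = (1 - lam) / d := Real.sq_sqrt (div_nonneg h1l hd0.le)
  have hαsq : α ^ 2 = lam + (1 - lam) / d :=
    Real.sq_sqrt (by positivity)
  -- the pinching map
  set Δ : Matrix (Fin d) (Fin d) ℂ → Matrix (Fin d) (Fin d) ℂ :=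
    fun X => ∑ a, P a * X * P a with hΔdef
  have hterm : ∀ (i j : Fin d) (X : Matrix (Fin d) (Fin d) ℂ) (a : Fin d),
      P a * (P i * X * P j) * P a
        = if a = i then (if j = a then P i * X * P j else 0) else 0 := by
    intro i j X a
    have h1 : P a * (P i * X * P j) * P a = (P a * P i) * X * (P j * P a) := by
      simp only [mul_assoc]
    rw [h1, hPo, hPo]
    by_cases h : a = i <;> by_cases h' : j = a <;> simp [h, h']
  have hΔunit : ∀ (i j : Fin d) (X : Matrix (Fin d) (Fin d) ℂ),
      Δ (P i * X * P j) = if j = i then P i * X * P j else 0 := by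
    intro i j X
    simp only [hΔdef, hterm, Finset.sum_ite_eq', Finset.mem_univ, if_true]
  have hΔadd : ∀ X Y, Δ (X + Y) = Δ X + Δ Y := by
    intro X Y
    simp [hΔdef, mul_add, add_mul, Finset.sum_add_distrib]
  have hΔsmul : ∀ (c : ℂ) X, Δ (c • X) = c • Δ X := by
    intro c X
    simp [hΔdef, mul_smul_comm, smul_mul_assoc, Finset.smul_sum]
  have hΔsum : ∀ (f : Fin d → Matrix (Fin d) (Fin d) ℂ),
      Δ (∑ i, f i) = ∑ i, Δ (f i) := by
    intro f
    simp only [hΔdef, Finset.mul_sum, Finset.sum_mul]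
    exact Finset.sum_comm
  have hΔΔ : ∀ X, Δ (Δ X) = Δ X := by
    intro X
    rw [hΔdef]
    show Δ (∑ a, P a * X * P a) = _
    rw [hΔsum]
    simp [hΔunit]
  -- key decomposition
  have hkey : ∀ X, Λ X = (κ:ℂ) • X + (((α - β)^2 : ℝ) : ℂ) • Δ X := by
    intro X
    have hs : ∀ a, sqrtA a = ((β:ℂ)) • (1 : Matrix (Fin d) (Fin d) ℂ)
        + (((α:ℂ)) - (β:ℂ)) • P a := by
      intro a
      rw [hsqrtA]
      module
    rw [hΛ]
    have expand : ∀ a, ((β:ℂ) • (1 : Matrix (Fin d) (Fin d) ℂ) + ((α:ℂ) - β) • P a) * X *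
        ((β:ℂ) • (1 : Matrix (Fin d) (Fin d) ℂ) + ((α:ℂ) - β) • P a)
        = ((β:ℂ) * β) • X + ((β:ℂ) * ((α:ℂ) - β)) • (X * P a)
          + (((α:ℂ) - β) * β) • (P a * X)
          + (((α:ℂ) - β) * ((α:ℂ) - β)) • (P a * X * P a) := by
      intro a
      simp only [add_mul, mul_add, smul_mul_assoc, mul_smul_comm, one_mul, mul_one, smul_smul]
      module
    have h1 : ∑ a, sqrtA a * X * sqrtA a
        = ∑ a, (((β:ℂ) * β) • X + ((β:ℂ) * ((α:ℂ) - β)) • (X * P a)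
          + (((α:ℂ) - β) * β) • (P a * X)
          + (((α:ℂ) - β) * ((α:ℂ) - β)) • (P a * X * P a)) :=
      Finset.sum_congr rfl (fun a _ => by rw [hs]; exact expand a)
    rw [h1, Finset.sum_add_distrib, Finset.sum_add_distrib, Finset.sum_add_distrib]
    have e1 : ∑ _a : Fin d, ((β:ℂ) * β) • X = (d:ℂ) • (((β:ℂ) * β) • X) := by
      rw [Finset.sum_const, Finset.card_univ, Fintype.card_fin]
      exact (Nat.cast_smul_eq_nsmul ℂ d _).symm
    have e2 : ∑ a, ((β:ℂ) * ((α:ℂ) - β)) • (X * P a)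
        = ((β:ℂ) * ((α:ℂ) - β)) • X := by
      rw [← Finset.smul_sum, ← Finset.mul_sum, hPsum, mul_one]
    have e3 : ∑ a, (((α:ℂ) - β) * β) • (P a * X)
        = (((α:ℂ) - β) * β) • X := by
      rw [← Finset.smul_sum, ← Finset.sum_mul, hPsum, one_mul]
    have e4 : ∑ a, (((α:ℂ) - β) * ((α:ℂ) - β)) • (P a * X * P a)
        = (((α:ℂ) - β) * ((α:ℂ) - β)) • Δ X := (Finset.smul_sum).symm
    rw [e1, e2, e3, e4, smul_smul]
    have hκc : ((κ:ℝ):ℂ) = (d : ℂ) * ((β:ℂ) * β) + (β:ℂ) * ((α:ℂ) - β)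
        + ((α:ℂ) - β) * β := by
      have : κ = (d:ℝ) * (β * β) + β * (α - β) + (α - β) * β := by
        rw [hκ, ← hβsq]; ring
      rw [this]; push_cast; ring
    have hγc : (((α - β)^2 : ℝ) : ℂ) = ((α:ℂ) - β) * ((α:ℂ) - β) := by
      push_cast; ring
    rw [hκc, hγc]
    module
  have hsum1 : κ + (α - β)^2 = 1 := by
    have h2 : (α - β)^2 = α^2 - 2*α*β + β^2 := by ring
    have hdne : (d:ℝ) ≠ 0 := ne_of_gt hd0
    rw [hκ, h2, hαsq, hβsq]
    field_simp
    ring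
  refine ⟨?_, ?_, ?_⟩
  · intro c
    have hΔdiag : Δ (∑ i, c i • P i) = ∑ i, c i • P i := by
      rw [hΔsum]
      refine Finset.sum_congr rfl fun i _ => ?_
      rw [hΔsmul]
      congr 1
      have : P i = P i * 1 * P i := by
        rw [mul_one, hPo]; simp
      conv_lhs => rw [this]
      rw [hΔunit]
      simp [hPo]
    rw [hkey, hΔdiag, ← add_smul]
    have : (κ:ℂ) + (((α - β)^2 : ℝ) : ℂ) = 1 := by
      rw [← Complex.ofReal_add, hsum1]; norm_num
    rw [this, one_smul]
  · intro i j hij X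
    rw [hkey, hΔunit, if_neg (Ne.symm hij)]
    simp
  · intro hκpos
    have hκ0 : (κ:ℂ) ≠ 0 := by
      exact_mod_cast ne_of_gt hκpos
    have hγ : (((α - β)^2 : ℝ) : ℂ) = 1 - (κ:ℂ) := by
      have : (α-β)^2 = 1 - κ := by linarith
      rw [this]; push_cast; ring
    set g : Matrix (Fin d) (Fin d) ℂ → Matrix (Fin d) (Fin d) ℂ :=
      fun Y => ((κ:ℂ))⁻¹ • (Y - Δ Y) + Δ Y with hgdef
    have hΔsub : ∀ X Y, Δ (X - Y) = Δ X - Δ Y := by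
      intro X Y
      simp [hΔdef, mul_sub, sub_mul, Finset.sum_sub_distrib]
    refine Function.bijective_iff_has_inverse.mpr ⟨g, ?_, ?_⟩
    · intro X
      have hΔΛ : Δ (Λ X) = Δ X := by
        rw [hkey, hΔadd, hΔsmul, hΔsmul, hΔΔ, ← add_smul, hγ]
        simp
      rw [hgdef]
      show ((κ:ℂ))⁻¹ • (Λ X - Δ (Λ X)) + Δ (Λ X) = X
      rw [hΔΛ, hkey, hγ]
      match_scalars <;> field_simp <;> ring
    · intro Y
      have hΔg : Δ (g Y) = Δ Y := by
        rw [hgdef]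
        show Δ (((κ:ℂ))⁻¹ • (Y - Δ Y) + Δ Y) = Δ Y
        rw [hΔadd, hΔsmul, hΔsub, hΔΔ]
        simp
      rw [hkey, hΔg, hγ, hgdef]
      show (κ:ℂ) • (((κ:ℂ))⁻¹ • (Y - Δ Y) + Δ Y) + (1 - (κ:ℂ)) • Δ Y = Y
      match_scalars <;> field_simp <;> ring
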